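/- Let p be a probability distribution on a finite set {x_1, ..., x_K}. For each N, let D_N consist of N i.i.d. samples from p and let Ĥ_mle(D_N) be the plug-in entropy estimator. Then the plug-in estimator is asymptotically unbiased: E[Ĥ_mle(D_N)] → H(p) as N → ∞. -/

import Mathlib

open Finset Real Filter

/-- Shannon entropy of a finite distribution (convention `0 * log 0 = 0`). -/
noncomputable def entropy {K : ℕ} (p : Fin K → ℝ) : ℝ := -∑ k, p k * Real.log (p k)

/-- The empirical (maximum-likelihood) distribution of a dataset of `N` samples. -/
noncomputable def empirical {N K : ℕ} (D : Fin N → Fin K) (k : Fin K) : ℝ :=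
  ((Finset.univ.filter (fun n => D n = k)).card : ℝ) / N

/-- Expectation of a statistic over `N` i.i.d. samples from `p`. -/
noncomputable def expect {N K : ℕ} (p : Fin K → ℝ) (f : (Fin N → Fin K) → ℝ) : ℝ :=
  ∑ D : Fin N → Fin K, (∏ n, p (D n)) * f D

open Polynomial in
lemma fiber_sum {K N : ℕ} (p : Fin K → ℝ) (hsum : ∑ j, p j = 1) (k : Fin K) (c : ℕ)
    (hc : c ∈ Finset.range (N + 1)) :
    ∑ D ∈ Finset.univ.filter
        (fun D : Fin N → Fin K => (Finset.univ.filter (fun n => D n = k)).card = c),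
        ∏ n, p (D n)
      = (N.choose c : ℝ) * p k ^ c * (1 - p k) ^ (N - c) := by
  have key : ∑ D : Fin N → Fin K,
        C (∏ n, p (D n)) * X ^ ((Finset.univ.filter (fun n => D n = k)).card)
      = (C (p k) * X + C (1 - p k)) ^ N := by
    have h2 : ∀ D : Fin N → Fin K,
        C (∏ n, p (D n)) * (X:ℝ[X]) ^ ((Finset.univ.filter (fun n => D n = k)).card)
          = ∏ n, C (p (D n)) * X ^ (if D n = k then 1 else 0) := by
      intro D
      rw [Finset.prod_mul_distrib, map_prod, Finset.prod_pow_eq_pow_sum]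
      congr 1
      rw [Finset.card_filter]
    have h3 : (∑ j, C (p j) * X ^ (if j = k then 1 else 0) : ℝ[X])
        = C (p k) * X + C (1 - p k) := by
      rw [← Finset.add_sum_erase _ _ (Finset.mem_univ k)]
      simp only [if_pos, pow_one, if_true]
      congr 1
      have : ∀ j ∈ Finset.univ.erase k, C (p j) * (X:ℝ[X]) ^ (if j = k then 1 else 0) = C (p j) := by
        intro j hj
        rw [if_neg (Finset.mem_erase.1 hj).1, pow_zero, mul_one]
      rw [Finset.sum_congr rfl this, ← map_sum]
      congr 1
      have := Finset.add_sum_erase Finset.univ p (Finset.mem_univ k)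
      linarith [hsum]
    simp only [h2]
    rw [← h3]
    have : ((∑ j, C (p j) * X ^ (if j = k then 1 else 0) : ℝ[X])) ^ N
        = ∏ _n : Fin N, (∑ j, C (p j) * X ^ (if j = k then 1 else 0) : ℝ[X]) := by
      simp [Finset.prod_const]
    rw [this, Finset.prod_univ_sum]
    simp [Fintype.piFinset_univ]
  have := congrArg (fun q : ℝ[X] => q.coeff c) key
  simp only [Polynomial.finset_sum_coeff, Polynomial.coeff_C_mul, Polynomial.coeff_X_pow] at this
  rw [add_pow] at this
  have hrhs : ((∑ m ∈ Finset.range (N + 1),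
        (C (p k) * X) ^ m * C (1 - p k) ^ (N - m) * (N.choose m : ℝ[X])).coeff c)
      = (N.choose c : ℝ) * p k ^ c * (1 - p k) ^ (N - c) := by
    rw [Polynomial.finset_sum_coeff]
    have : ∀ m ∈ Finset.range (N + 1),
        ((C (p k) * X) ^ m * C (1 - p k) ^ (N - m) * (N.choose m : ℝ[X])).coeff c
          = if c = m then (N.choose m : ℝ) * p k ^ m * (1 - p k) ^ (N - m) else 0 := by
      intro m _
      have : ((C (p k) * X) ^ m * C (1 - p k) ^ (N - m) * (N.choose m : ℝ[X]))
          = C ((N.choose m : ℝ) * p k ^ m * (1 - p k) ^ (N - m)) * X ^ m := by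
        simp only [mul_pow, ← Polynomial.C_pow, ← Polynomial.C_eq_natCast]
        rw [Polynomial.C_mul, Polynomial.C_mul]
        ring
      rw [this, Polynomial.coeff_C_mul, Polynomial.coeff_X_pow]
      split <;> simp
    rw [Finset.sum_congr rfl this, Finset.sum_ite_eq _ c _, if_pos hc]
  rw [hrhs] at this
  rw [← this, Finset.sum_filter]
  apply Finset.sum_congr rfl
  intro D _
  by_cases h : (Finset.univ.filter (fun n => D n = k)).card = c <;> simp [h, eq_comm]

/-- `x ↦ x * log x` as a continuous map on the unit interval. -/
noncomputable def phiC : C(unitInterval, ℝ) :=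
  ⟨fun x => (x : ℝ) * Real.log (x : ℝ), Real.continuous_mul_log.comp continuous_subtype_val⟩

lemma expect_phi_eq_bernstein {K N : ℕ} (p : Fin K → ℝ) (hsum : ∑ j, p j = 1)
    (k : Fin K) (x : unitInterval) (hx : (x : ℝ) = p k) :
    ∑ D : Fin N → Fin K, (∏ n, p (D n)) * (empirical D k * Real.log (empirical D k))
      = bernsteinApproximation N phiC x := by
  have hmaps : ∀ D : Fin N → Fin K, D ∈ (Finset.univ : Finset (Fin N → Fin K)) →
      (Finset.univ.filter (fun n => D n = k)).card ∈ Finset.range (N + 1) := by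
    intro D _
    simp only [Finset.mem_range, Nat.lt_succ_iff]
    exact le_trans (Finset.card_filter_le _ _) (by simp)
  rw [← Finset.sum_fiberwise_of_maps_to hmaps
    (fun D => (∏ n, p (D n)) * (empirical D k * Real.log (empirical D k)))]
  rw [bernsteinApproximation]
  simp only [ContinuousMap.coe_sum, ContinuousMap.coe_smul, Finset.sum_apply, Pi.smul_apply,
    smul_eq_mul]
  have hpt : ∀ i : Fin (N + 1),
      phiC (bernstein.z i) * bernstein N i x
        = (fun c : ℕ => (((c : ℝ)/N) * Real.log ((c : ℝ)/N)) *
            ((N.choose c : ℝ) * (x : ℝ) ^ c * (1 - (x : ℝ)) ^ (N - c))) (i : ℕ) := by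
    intro i
    rw [bernstein_apply]
    rfl
  simp only [ContinuousMap.mul_apply, ContinuousMap.const_apply, mul_comm (bernstein N _ x)]
  rw [Finset.sum_congr rfl (fun i _ => hpt i),
    ← Finset.sum_range (fun c : ℕ => (((c : ℝ)/N) * Real.log ((c : ℝ)/N)) *
        ((N.choose c : ℝ) * (x : ℝ) ^ c * (1 - (x : ℝ)) ^ (N - c)))]
  apply Finset.sum_congr rfl
  intro c hc
  have hfib : ∀ D ∈ Finset.univ.filter
      (fun D : Fin N → Fin K => (Finset.univ.filter (fun n => D n = k)).card = c),
      (∏ n, p (D n)) * (empirical D k * Real.log (empirical D k))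
        = (∏ n, p (D n)) * (((c : ℝ)/N) * Real.log ((c : ℝ)/N)) := by
    intro D hD
    have : empirical D k = (c : ℝ) / N := by
      rw [empirical, (Finset.mem_filter.1 hD).2]
    rw [this]
  rw [Finset.sum_congr rfl hfib, ← Finset.sum_mul, fiber_sum p hsum k c hc, hx]
  ring

/-- The plug-in entropy estimator is asymptotically unbiased:
`E[Ĥ_mle(D_N)] → H(p)` as `N → ∞`. -/
theorem plugin_asymptotically_unbiased {K : ℕ}
    (p : Fin K → ℝ) (hp : ∀ k, 0 ≤ p k) (hsum : ∑ k, p k = 1) :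
    Tendsto
      (fun N : ℕ => expect p (fun D : Fin N → Fin K => entropy (empirical D)))
      atTop (nhds (entropy p)) := by
  have hle : ∀ k, p k ≤ 1 := by
    intro k
    calc p k ≤ ∑ j, p j := Finset.single_le_sum (fun j _ => hp j) (Finset.mem_univ k)
    _ = 1 := hsum
  set x : Fin K → unitInterval := fun k => ⟨p k, ⟨hp k, hle k⟩⟩ with hxdef
  have hexpect : ∀ N : ℕ,
      expect p (fun D : Fin N → Fin K => entropy (empirical D))
        = -∑ k, bernsteinApproximation N phiC (x k) := by
    intro N
    show (∑ D : Fin N → Fin K, (∏ n, p (D n)) * entropy (empirical D)) = _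
    simp only [entropy, mul_neg, Finset.mul_sum, Finset.sum_neg_distrib]
    rw [Finset.sum_comm]
    congr 1
    apply Finset.sum_congr rfl
    intro k _
    exact expect_phi_eq_bernstein p hsum k (x k) rfl
  simp only [hexpect]
  have hent : entropy p = -∑ k, phiC (x k) := by
    rw [entropy]
    congr 1
  rw [hent]
  apply Filter.Tendsto.neg
  apply tendsto_finset_sum
  intro k _
  exact ((continuous_eval_const (x k)).tendsto phiC).comp
    (bernsteinApproximation_uniform phiC)
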